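/- arXiv:1903.00823 — 3 statements merged into one kernel-verified Lean document; each statement's English description precedes it below -/
import Mathlib

section
/- For every dominant weight λ = (a, b) (with a, b ≥ 0) of the root system of type G₂ and every w ∈ W, the following are equivalent: (i) there exist integers k ≥ q ≥ 0 such that w(λ + ρ) − ρ = (2k + q)α + (k + q)β; (ii) w⁻¹(α) and w⁻¹(β) are both positive roots. Moreover, when (ii) holds, the integers are given by q = ⟨w(λ+ρ) − ρ, β∨⟩ and k = ⟨w(λ+ρ) − ρ, α∨ + β∨⟩. -/
/-!
Weight lattice of G₂ in fundamental-weight coordinates: a weight λ is the pair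
(⟨λ, α∨⟩, ⟨λ, β∨⟩) ∈ ℤ × ℤ. In these coordinates the simple roots are
α = (2, -1) (short) and β = (-3, 2) (long), and ρ = (1, 1).
-/

/-- The simple reflection `s_α (a, b) = (-a, a + b)` as a linear automorphism of ℤ². -/
def G2.sα : (ℤ × ℤ) ≃ₗ[ℤ] (ℤ × ℤ) where
  toFun p := (-p.1, p.1 + p.2)
  invFun p := (-p.1, p.1 + p.2)
  map_add' x y := by
    simp only [Prod.ext_iff, Prod.fst_add, Prod.snd_add, Prod.smul_def, smul_eq_mul,
      RingHom.id_apply, Prod.mk.injEq, Prod.fst_neg, Prod.snd_neg]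
    constructor <;> ring
  map_smul' c x := by
    simp only [Prod.ext_iff, Prod.fst_add, Prod.snd_add, Prod.smul_def, smul_eq_mul,
      RingHom.id_apply, Prod.mk.injEq, Prod.fst_neg, Prod.snd_neg]
    constructor <;> ring
  left_inv p := by
    simp only [Prod.ext_iff, Prod.fst_add, Prod.snd_add, Prod.smul_def, smul_eq_mul,
      RingHom.id_apply, Prod.mk.injEq, Prod.fst_neg, Prod.snd_neg]
    constructor <;> ring
  right_inv p := by
    simp only [Prod.ext_iff, Prod.fst_add, Prod.snd_add, Prod.smul_def, smul_eq_mul,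
      RingHom.id_apply, Prod.mk.injEq, Prod.fst_neg, Prod.snd_neg]
    constructor <;> ring

/-- The simple reflection `s_β (a, b) = (a + 3b, -b)` as a linear automorphism of ℤ². -/
def G2.sβ : (ℤ × ℤ) ≃ₗ[ℤ] (ℤ × ℤ) where
  toFun p := (p.1 + 3 * p.2, -p.2)
  invFun p := (p.1 + 3 * p.2, -p.2)
  map_add' x y := by
    simp only [Prod.ext_iff, Prod.fst_add, Prod.snd_add, Prod.smul_def, smul_eq_mul,
      RingHom.id_apply, Prod.mk.injEq, Prod.fst_neg, Prod.snd_neg]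
    constructor <;> ring
  map_smul' c x := by
    simp only [Prod.ext_iff, Prod.fst_add, Prod.snd_add, Prod.smul_def, smul_eq_mul,
      RingHom.id_apply, Prod.mk.injEq, Prod.fst_neg, Prod.snd_neg]
    constructor <;> ring
  left_inv p := by
    simp only [Prod.ext_iff, Prod.fst_add, Prod.snd_add, Prod.smul_def, smul_eq_mul,
      RingHom.id_apply, Prod.mk.injEq, Prod.fst_neg, Prod.snd_neg]
    constructor <;> ring
  right_inv p := by
    simp only [Prod.ext_iff, Prod.fst_add, Prod.snd_add, Prod.smul_def, smul_eq_mul,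
      RingHom.id_apply, Prod.mk.injEq, Prod.fst_neg, Prod.snd_neg]
    constructor <;> ring

/-- The Weyl group of G₂: the subgroup of linear automorphisms of the weight lattice ℤ²
generated by the two simple reflections. -/
def G2.W : Subgroup ((ℤ × ℤ) ≃ₗ[ℤ] (ℤ × ℤ)) := Subgroup.closure {G2.sα, G2.sβ}

/-- The short simple root α = (2, -1) in fundamental-weight coordinates. -/
def G2.α : ℤ × ℤ := (2, -1)

/-- The long simple root β = (-3, 2) in fundamental-weight coordinates. -/
def G2.β : ℤ × ℤ := (-3, 2)

/-- The half sum ρ = (1, 1) of the positive roots. -/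
def G2.ρ : ℤ × ℤ := (1, 1)

/-- The six positive roots of G₂ in fundamental-weight coordinates:
α, β, α+β, 2α+β, 3α+β, 3α+2β. -/
def G2.PosRoots : Set (ℤ × ℤ) := {(2, -1), (-3, 2), (-1, 1), (1, 0), (3, -1), (0, 1)}

section Aux

/-- Apply a "matrix" given by a pair of columns to a vector. -/
def G2.app (c : (ℤ × ℤ) × (ℤ × ℤ)) (v : ℤ × ℤ) : ℤ × ℤ := v.1 • c.1 + v.2 • c.2

/-- The data of a linear automorphism: images of the basis vectors under `w` and `w⁻¹`. -/
def G2.quad (w : (ℤ × ℤ) ≃ₗ[ℤ] (ℤ × ℤ)) : ((ℤ × ℤ) × (ℤ × ℤ)) × ((ℤ × ℤ) × (ℤ × ℤ)) :=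
  ((w (1, 0), w (0, 1)), (w⁻¹ (1, 0), w⁻¹ (0, 1)))

def G2.mulQ (q₁ q₂ : ((ℤ × ℤ) × (ℤ × ℤ)) × ((ℤ × ℤ) × (ℤ × ℤ))) :
    ((ℤ × ℤ) × (ℤ × ℤ)) × ((ℤ × ℤ) × (ℤ × ℤ)) :=
  ((G2.app q₁.1 q₂.1.1, G2.app q₁.1 q₂.1.2), (G2.app q₂.2 q₁.2.1, G2.app q₂.2 q₁.2.2))

/-- The twelve elements of the Weyl group of G₂, as quadruples of columns of `w` and `w⁻¹`. -/
def G2.S : Finset (((ℤ × ℤ) × (ℤ × ℤ)) × ((ℤ × ℤ) × (ℤ × ℤ))) :=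
  { (((1,0),(0,1)),((1,0),(0,1))),
    (((-2,1),(-3,1)),((1,-1),(3,-2))),
    (((-2,1),(-3,2)),((-2,1),(-3,2))),
    (((-1,0),(-3,1)),((-1,0),(-3,1))),
    (((-1,1),(-3,2)),((2,-1),(3,-1))),
    (((-1,0),(0,-1)),((-1,0),(0,-1))),
    (((-1,1),(0,1)),((-1,1),(0,1))),
    (((1,-1),(0,-1)),((1,-1),(0,-1))),
    (((1,-1),(3,-2)),((-2,1),(-3,1))),
    (((1,0),(3,-1)),((1,0),(3,-1))),
    (((2,-1),(3,-2)),((2,-1),(3,-2))),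
    (((2,-1),(3,-1)),((-1,1),(-3,2))) }

lemma G2.apply_eq (w : (ℤ × ℤ) ≃ₗ[ℤ] (ℤ × ℤ)) (p : ℤ × ℤ) :
    w p = p.1 • w (1, 0) + p.2 • w (0, 1) := by
  have hp : p = p.1 • ((1 : ℤ), (0 : ℤ)) + p.2 • ((0 : ℤ), (1 : ℤ)) := by
    simp [Prod.ext_iff]
  conv_lhs => rw [hp]
  rw [map_add, map_smul, map_smul]

lemma G2.quad_mul (w₁ w₂ : (ℤ × ℤ) ≃ₗ[ℤ] (ℤ × ℤ)) :
    G2.quad (w₁ * w₂) = G2.mulQ (G2.quad w₁) (G2.quad w₂) := by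
  have h1 : ∀ p, (w₁ * w₂) p = w₁ (w₂ p) := fun p => rfl
  have h2 : ∀ p, (w₁ * w₂)⁻¹ p = w₂⁻¹ (w₁⁻¹ p) := fun p => rfl
  simp only [G2.quad, G2.mulQ, h1, h2]
  rw [G2.apply_eq w₁ (w₂ (1,0)), G2.apply_eq w₁ (w₂ (0,1)),
    G2.apply_eq w₂⁻¹ (w₁⁻¹ (1,0)), G2.apply_eq w₂⁻¹ (w₁⁻¹ (0,1))]
  rfl

lemma G2.quad_inv (w : (ℤ × ℤ) ≃ₗ[ℤ] (ℤ × ℤ)) :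
    G2.quad w⁻¹ = ((G2.quad w).2, (G2.quad w).1) := by
  simp only [G2.quad, inv_inv]

lemma G2.S_mul : ∀ q₁ ∈ G2.S, ∀ q₂ ∈ G2.S, G2.mulQ q₁ q₂ ∈ G2.S := by decide

lemma G2.S_swap : ∀ q ∈ G2.S, ((q.2, q.1)) ∈ G2.S := by decide

lemma G2.quad_mem_S (w : (ℤ × ℤ) ≃ₗ[ℤ] (ℤ × ℤ)) (hw : w ∈ G2.W) : G2.quad w ∈ G2.S := by
  induction hw using Subgroup.closure_induction with
  | mem x hx =>
    rcases hx with h | h <;> subst h <;> decide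
  | one => decide
  | mul x y hx hy ihx ihy => rw [G2.quad_mul]; exact G2.S_mul _ ihx _ ihy
  | inv x hx ihx => rw [G2.quad_inv]; exact G2.S_swap _ ihx

lemma G2.sum_eq (k q : ℤ) : (2*k+q) • G2.α + (k+q) • G2.β = (k - q, q) := by
  simp only [G2.α, G2.β, Prod.smul_mk, smul_eq_mul, Prod.mk_add_mk, Prod.mk.injEq]
  constructor <;> ring

end Aux

/-- For a dominant weight λ = (a, b) of G₂ and w ∈ W:
(i) there exist integers k ≥ q ≥ 0 with w(λ+ρ) − ρ = (2k+q)α + (k+q)β, iff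
(ii) w⁻¹(α) and w⁻¹(β) are both positive roots; moreover when (ii) holds the integers
are given by q = ⟨w(λ+ρ) − ρ, β∨⟩ and k = ⟨w(λ+ρ) − ρ, α∨ + β∨⟩ (in the chosen
coordinates, q is the second component of w(λ+ρ) − ρ and k is the sum of the two
components). -/
theorem G2.exists_kq_iff_inv_pos (a b : ℤ) (ha : 0 ≤ a) (hb : 0 ≤ b)
    (w : (ℤ × ℤ) ≃ₗ[ℤ] (ℤ × ℤ)) (hw : w ∈ G2.W) :
    ((∃ k q : ℤ, 0 ≤ q ∧ q ≤ k ∧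
        w ((a, b) + G2.ρ) - G2.ρ = (2 * k + q) • G2.α + (k + q) • G2.β)
      ↔ (w⁻¹ G2.α ∈ G2.PosRoots ∧ w⁻¹ G2.β ∈ G2.PosRoots))
    ∧ ((w⁻¹ G2.α ∈ G2.PosRoots ∧ w⁻¹ G2.β ∈ G2.PosRoots) →
        -- when (ii) holds, the integers are q = ⟨w(λ+ρ) − ρ, β∨⟩ and
        -- k = ⟨w(λ+ρ) − ρ, α∨ + β∨⟩, i.e. in these coordinates
        -- q = (w(λ+ρ) − ρ).2 and k = (w(λ+ρ) − ρ).1 + (w(λ+ρ) − ρ).2: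
        (0 ≤ (w ((a, b) + G2.ρ) - G2.ρ).2 ∧
         (w ((a, b) + G2.ρ) - G2.ρ).2 ≤
            (w ((a, b) + G2.ρ) - G2.ρ).1 + (w ((a, b) + G2.ρ) - G2.ρ).2 ∧
         w ((a, b) + G2.ρ) - G2.ρ =
            (2 * ((w ((a, b) + G2.ρ) - G2.ρ).1 + (w ((a, b) + G2.ρ) - G2.ρ).2)
              + (w ((a, b) + G2.ρ) - G2.ρ).2) • G2.α
            + (((w ((a, b) + G2.ρ) - G2.ρ).1 + (w ((a, b) + G2.ρ) - G2.ρ).2)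
              + (w ((a, b) + G2.ρ) - G2.ρ).2) • G2.β) ∧
        ∀ k q : ℤ, 0 ≤ q → q ≤ k →
          w ((a, b) + G2.ρ) - G2.ρ = (2 * k + q) • G2.α + (k + q) • G2.β →
            q = (w ((a, b) + G2.ρ) - G2.ρ).2 ∧
            k = (w ((a, b) + G2.ρ) - G2.ρ).1 + (w ((a, b) + G2.ρ) - G2.ρ).2) := by
  have hq := G2.quad_mem_S w hw
  have hsum : ((a, b) : ℤ × ℤ) + G2.ρ = (a + 1, b + 1) := by
    simp [G2.ρ, Prod.ext_iff]
  rw [hsum]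
  have happ := G2.apply_eq w ((a + 1, b + 1))
  have hαapp := G2.apply_eq w⁻¹ G2.α
  have hβapp := G2.apply_eq w⁻¹ G2.β
  simp only [G2.S, Finset.mem_insert, Finset.mem_singleton] at hq
  rcases hq with hq|hq|hq|hq|hq|hq|hq|hq|hq|hq|hq|hq <;>
  · simp only [G2.quad, Prod.mk.injEq] at hq
    obtain ⟨⟨h1, h2⟩, h3, h4⟩ := hq
    rw [h1, h2] at happ
    rw [h3, h4] at hαapp
    rw [h3, h4] at hβapp
    simp only [G2.α, G2.β, Prod.smul_mk, smul_eq_mul, Prod.mk_add_mk] at hαapp hβapp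
    norm_num at hαapp hβapp
    rw [happ]
    simp only [G2.ρ, G2.α, G2.β, G2.PosRoots, Set.mem_insert_iff, Set.mem_singleton_iff,
      Prod.smul_mk, smul_eq_mul, Prod.mk_add_mk, Prod.mk_sub_mk, Prod.mk.injEq]
    rw [show w⁻¹ = w.symm from rfl, hαapp, hβapp]
    simp only [Prod.mk.injEq]
    constructor
    · constructor
      · rintro ⟨k, q, hq0, hqk, he1, he2⟩
        constructor <;> first | omega | simp
      · rintro ⟨hp1, hp2⟩
        first
        | exact ⟨a + b, b, by omega, by omega, by omega, by omega⟩
        | (exfalso; omega)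
    · rintro ⟨hp1, hp2⟩
      first
      | exact ⟨⟨by omega, by omega, by omega, by omega⟩, fun k q hq hk h => ⟨by omega, by omega⟩⟩
      | (exfalso; omega)
end

section
/- For every dominant weight λ = (a, b) (with a, b ≥ 0) of the root system of type G₂, there exists exactly one triple (w, k, q) consisting of w ∈ W and integers k ≥ q ≥ 0 such that w(λ + ρ) − ρ = (2k + q)α + (k + q)β; moreover for this triple w = 1, k = a + b, and q = b. (This is the combinatorial content of the statement that every irreducible algebraic representation of G₂ occurs with multiplicity exactly one in the ring of regular functions on the 8-dimensional nilpotent orbit.) -/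
namespace G2

/-- 2×2 integer matrices as quadruples (row-major). -/
abbrev Mat := ℤ × ℤ × ℤ × ℤ

def mmul (m n : Mat) : Mat :=
  (m.1 * n.1 + m.2.1 * n.2.2.1, m.1 * n.2.1 + m.2.1 * n.2.2.2,
   m.2.2.1 * n.1 + m.2.2.2 * n.2.2.1, m.2.2.1 * n.2.1 + m.2.2.2 * n.2.2.2)

def mapp (m : Mat) (p : ℤ × ℤ) : ℤ × ℤ :=
  (m.1 * p.1 + m.2.1 * p.2, m.2.2.1 * p.1 + m.2.2.2 * p.2)

def L : List Mat :=
  [(1,0,0,1), (-1,0,1,1), (1,3,0,-1), (-2,-3,1,1), (-2,-3,1,2), (-1,-3,0,1),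
   (-1,-3,1,2), (-1,0,0,-1), (1,0,-1,-1), (1,3,-1,-2), (2,3,-1,-2), (2,3,-1,-1)]

lemma mapp_mmul (m n : Mat) (p : ℤ × ℤ) : mapp (mmul m n) p = mapp m (mapp n p) := by
  simp only [mapp, mmul, Prod.mk.injEq]
  constructor <;> ring

lemma L_mul_closed : ∀ m ∈ L, ∀ n ∈ L, mmul m n ∈ L := by decide

lemma L_inv : ∀ m ∈ L, ∃ n ∈ L, mmul m n = (1,0,0,1) ∧ mmul n m = (1,0,0,1) := by decide

lemma mem_W_rep {w : (ℤ × ℤ) ≃ₗ[ℤ] (ℤ × ℤ)} (hw : w ∈ G2.W) :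
    ∃ m ∈ L, ∀ p, w p = mapp m p := by
  induction hw using Subgroup.closure_induction with
  | mem x hx =>
    rcases hx with hx | hx
    · exact ⟨(-1,0,1,1), by decide, by subst hx; intro p; simp [sα, mapp]⟩
    · exact ⟨(1,3,0,-1), by decide, by subst hx; intro p; simp [sβ, mapp]⟩
  | one => exact ⟨(1,0,0,1), by decide, by intro p; simp [mapp]⟩
  | mul x y hx hy ihx ihy =>
    obtain ⟨m, hm, hxm⟩ := ihx
    obtain ⟨n, hn, hyn⟩ := ihy
    refine ⟨mmul m n, L_mul_closed m hm n hn, fun p => ?_⟩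
    have : (x * y) p = x (y p) := rfl
    rw [this, hyn, hxm, mapp_mmul]
  | inv x hx ihx =>
    obtain ⟨m, hm, hxm⟩ := ihx
    obtain ⟨n, hn, hmn, hnm⟩ := L_inv m hm
    refine ⟨n, hn, fun p => ?_⟩
    have h1 : x (mapp n p) = p := by
      rw [hxm, ← mapp_mmul, hmn]; simp [mapp]
    have : x⁻¹ p = x⁻¹ (x (mapp n p)) := by rw [h1]
    rw [this]
    exact x.symm_apply_apply _

end G2

/-- For every dominant weight λ = (a, b) of G₂, there is exactly one
triple (w, k, q) with w ∈ W and integers k ≥ q ≥ 0 such that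
w(λ+ρ) − ρ = (2k+q)α + (k+q)β; moreover this triple is (1, a+b, b). -/
theorem G2.existsUnique_triple (a b : ℤ) (ha : 0 ≤ a) (hb : 0 ≤ b) :
    (∃! t : ((ℤ × ℤ) ≃ₗ[ℤ] (ℤ × ℤ)) × ℤ × ℤ,
        t.1 ∈ G2.W ∧ 0 ≤ t.2.2 ∧ t.2.2 ≤ t.2.1 ∧
          t.1 ((a, b) + G2.ρ) - G2.ρ = (2 * t.2.1 + t.2.2) • G2.α + (t.2.1 + t.2.2) • G2.β)
    ∧ (∀ (w : (ℤ × ℤ) ≃ₗ[ℤ] (ℤ × ℤ)) (k q : ℤ), w ∈ G2.W → 0 ≤ q → q ≤ k →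
        w ((a, b) + G2.ρ) - G2.ρ = (2 * k + q) • G2.α + (k + q) • G2.β →
          w = 1 ∧ k = a + b ∧ q = b) := by

  have ρdef : G2.ρ = (1, 1) := rfl
  have key : ∀ (w : (ℤ × ℤ) ≃ₗ[ℤ] (ℤ × ℤ)) (k q : ℤ), w ∈ G2.W → 0 ≤ q → q ≤ k →
      w ((a, b) + G2.ρ) - G2.ρ = (2 * k + q) • G2.α + (k + q) • G2.β →
        w = 1 ∧ k = a + b ∧ q = b := by
    intro w k q hw hq hkq heq
    obtain ⟨m, hm, hrep⟩ := G2.mem_W_rep hw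
    rw [hrep] at heq
    have heq' : G2.mapp m (a + 1, b + 1) = (k - q + 1, q + 1) := by
      have : ((a, b) + G2.ρ) = ((a + 1, b + 1) : ℤ × ℤ) := by
        simp [G2.ρ, Prod.ext_iff]
      rw [this] at heq
      have h2 := congrArg (· + G2.ρ) heq
      simp only [sub_add_cancel] at h2
      rw [h2]
      simp only [G2.α, G2.β, G2.ρ, Prod.ext_iff, Prod.smul_def, smul_eq_mul,
        Prod.fst_add, Prod.snd_add]
      constructor <;> ring
    simp only [G2.L, List.mem_cons, List.not_mem_nil, or_false] at hm
    obtain rfl|rfl|rfl|rfl|rfl|rfl|rfl|rfl|rfl|rfl|rfl|rfl := hm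
    all_goals simp only [G2.mapp, Prod.mk.injEq] at heq'
    · refine ⟨LinearEquiv.ext fun p => ?_, by omega, by omega⟩
      rw [hrep]; simp [G2.mapp]
    all_goals exact absurd heq' (by omega)
  constructor
  · refine ⟨(1, a + b, b), ⟨Subgroup.one_mem _, hb, show b ≤ a + b by omega, ?_⟩, ?_⟩
    · show ((a, b) + G2.ρ) - G2.ρ = _
      simp only [add_sub_cancel_right, G2.α, G2.β, G2.ρ,
        Prod.smul_def, smul_eq_mul, Prod.ext_iff, Prod.fst_add, Prod.snd_add]
      constructor <;> ring
    · rintro ⟨w, k, q⟩ ⟨h1, h2, h3, h4⟩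
      obtain ⟨e1, e2, e3⟩ := key w k q h1 h2 h3 h4
      simp [e1, e2, e3]
  · exact key
end

section
/- In the complex simple Lie algebra 𝔤₂ of type G₂, let h = 2h_α + 3h_β, where h_α and h_β are the coroots of the short simple root α and the long simple root β respectively (so that α(h) = 1 and β(h) = 0). Then there exist elements e and f of 𝔤₂ such that (h, e, f) is an sl₂-triple, i.e. [h, e] = 2e, [h, f] = −2f, and [e, f] = h, with e ≠ 0. -/
open LieAlgebra CartanMatrix

namespace G2Orbit

/-- The canonical generators of `𝔤₂ = LieAlgebra.g₂ ℂ`, i.e. the images in the quotient of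
the free Lie algebra of the generators `H i`, `E i`, `F i`. -/
noncomputable def gen (x : CartanMatrix.Generators (Fin 2)) : LieAlgebra.g₂ ℂ :=
  LieSubmodule.Quotient.mk (N := CartanMatrix.Relations.toIdeal ℂ CartanMatrix.G₂)
    (FreeLieAlgebra.of ℂ x)

/-- The coroot `h_α` of the short simple root `α`.  (With Mathlib's convention
`CartanMatrix.G₂ = !![2, -3; -1, 2]` and `⁅H i, E j⁆ = G₂ i j • E j`, the short simple
root corresponds to the index `0`.) -/
noncomputable def hα : LieAlgebra.g₂ ℂ := gen (Generators.H 0)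

/-- The coroot `h_β` of the long simple root `β` (index `1`). -/
noncomputable def hβ : LieAlgebra.g₂ ℂ := gen (Generators.H 1)

/-- The semisimple element `h = 2h_α + 3h_β` of the standard triple attached to the
8-dimensional nilpotent orbit of complex `G₂`; it satisfies `α(h) = 1` and `β(h) = 0`. -/
noncomputable def h : LieAlgebra.g₂ ℂ := (2 : ℂ) • hα + (3 : ℂ) • hβ

/-! ### Auxiliary material -/

section Aux

open CartanMatrix.Relations FreeLieAlgebra

local notation "𝔉" => FreeLieAlgebra ℂ (Generators (Fin 2))

local notation "𝔈" i => FreeLieAlgebra.of ℂ (Generators.E i)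
local notation "𝔽" i => FreeLieAlgebra.of ℂ (Generators.F i)
local notation "ℌ" i => FreeLieAlgebra.of ℂ (Generators.H i)

/-- Root vectors in `𝔤₂`. -/
noncomputable def eA : LieAlgebra.g₂ ℂ := gen (Generators.E 0)
noncomputable def eB : LieAlgebra.g₂ ℂ := gen (Generators.E 1)
noncomputable def fA : LieAlgebra.g₂ ℂ := gen (Generators.F 0)
noncomputable def fB : LieAlgebra.g₂ ℂ := gen (Generators.F 1)

noncomputable def pE : LieAlgebra.g₂ ℂ := ⁅eA, eB⁆
noncomputable def qE : LieAlgebra.g₂ ℂ := ⁅eA, pE⁆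
noncomputable def pF : LieAlgebra.g₂ ℂ := ⁅fA, fB⁆
noncomputable def qF : LieAlgebra.g₂ ℂ := ⁅fA, pF⁆

lemma mem_toSet_HH (p : Fin 2 × Fin 2) :
    Relations.HH ℂ p ∈ Relations.toSet ℂ CartanMatrix.G₂ :=
  Set.mem_union_left _ <| Set.mem_union_left _ <| Set.mem_union_left _ <|
    Set.mem_union_left _ <| Set.mem_union_left _ <| Set.mem_range_self p

lemma mem_toSet_EF (p : Fin 2 × Fin 2) :
    Relations.EF ℂ p ∈ Relations.toSet ℂ CartanMatrix.G₂ :=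
  Set.mem_union_left _ <| Set.mem_union_left _ <| Set.mem_union_left _ <|
    Set.mem_union_left _ <| Set.mem_union_right _ <| Set.mem_range_self p

lemma mem_toSet_HE (p : Fin 2 × Fin 2) :
    Relations.HE ℂ CartanMatrix.G₂ p ∈ Relations.toSet ℂ CartanMatrix.G₂ :=
  Set.mem_union_left _ <| Set.mem_union_left _ <| Set.mem_union_left _ <|
    Set.mem_union_right _ <| Set.mem_range_self p

lemma mem_toSet_HF (p : Fin 2 × Fin 2) :
    Relations.HF ℂ CartanMatrix.G₂ p ∈ Relations.toSet ℂ CartanMatrix.G₂ :=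
  Set.mem_union_left _ <| Set.mem_union_left _ <| Set.mem_union_right _ <|
    Set.mem_range_self p

/-- If `a - b` is one of the Serre relations, then `a` and `b` have the same image in `𝔤₂`. -/
lemma gen_rel {a b : 𝔉} (hab : a - b ∈ Relations.toSet ℂ CartanMatrix.G₂) :
    (LieSubmodule.Quotient.mk (N := Relations.toIdeal ℂ CartanMatrix.G₂) a :
        LieAlgebra.g₂ ℂ) =
      LieSubmodule.Quotient.mk (N := Relations.toIdeal ℂ CartanMatrix.G₂) b := by
  rw [Submodule.Quotient.eq]
  exact LieSubmodule.subset_lieSpan hab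

lemma lie_genH_genE (i j : Fin 2) :
    ⁅gen (Generators.H i), gen (Generators.E j)⁆ =
      ((CartanMatrix.G₂ i j : ℤ) : ℂ) • gen (Generators.E j) := by
  have h1 : (LieSubmodule.Quotient.mk (N := Relations.toIdeal ℂ CartanMatrix.G₂)
      (⁅(ℌ i), (𝔈 j)⁆ : 𝔉) : LieAlgebra.g₂ ℂ) =
      LieSubmodule.Quotient.mk (N := Relations.toIdeal ℂ CartanMatrix.G₂)
        (CartanMatrix.G₂ i j • (𝔈 j) : 𝔉) :=
    gen_rel (mem_toSet_HE (i, j))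
  rw [Int.cast_smul_eq_zsmul]
  exact h1.trans (Submodule.Quotient.mk_smul _ _ _)

lemma lie_genH_genF (i j : Fin 2) :
    ⁅gen (Generators.H i), gen (Generators.F j)⁆ =
      ((-(CartanMatrix.G₂ i j) : ℤ) : ℂ) • gen (Generators.F j) := by
  have h1 : (LieSubmodule.Quotient.mk (N := Relations.toIdeal ℂ CartanMatrix.G₂)
      (⁅(ℌ i), (𝔽 j)⁆ : 𝔉) : LieAlgebra.g₂ ℂ) =
      LieSubmodule.Quotient.mk (N := Relations.toIdeal ℂ CartanMatrix.G₂)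
        ((-(CartanMatrix.G₂ i j)) • (𝔽 j) : 𝔉) := by
    refine gen_rel ?_
    have := mem_toSet_HF (i, j)
    simpa [Relations.HF, sub_neg_eq_add, neg_smul] using this
  rw [Int.cast_smul_eq_zsmul]
  exact h1.trans (Submodule.Quotient.mk_smul _ _ _)

lemma lie_eA_fA : ⁅eA, fA⁆ = hα := by
  refine gen_rel ?_
  have := mem_toSet_EF (0, 0)
  simpa [Relations.EF] using this

lemma lie_eB_fB : ⁅eB, fB⁆ = hβ := by
  refine gen_rel ?_
  have := mem_toSet_EF (1, 1)
  simpa [Relations.EF] using this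

lemma lie_eA_fB : ⁅eA, fB⁆ = 0 := by
  have h1 : (LieSubmodule.Quotient.mk (N := Relations.toIdeal ℂ CartanMatrix.G₂)
      (⁅(𝔈 (0 : Fin 2)), (𝔽 (1 : Fin 2))⁆ : 𝔉) : LieAlgebra.g₂ ℂ) =
      LieSubmodule.Quotient.mk (N := Relations.toIdeal ℂ CartanMatrix.G₂) (0 : 𝔉) := by
    refine gen_rel ?_
    have := mem_toSet_EF (0, 1)
    simpa [Relations.EF] using this
  simp at h1
  exact h1

lemma lie_eB_fA : ⁅eB, fA⁆ = 0 := by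
  have h1 : (LieSubmodule.Quotient.mk (N := Relations.toIdeal ℂ CartanMatrix.G₂)
      (⁅(𝔈 (1 : Fin 2)), (𝔽 (0 : Fin 2))⁆ : 𝔉) : LieAlgebra.g₂ ℂ) =
      LieSubmodule.Quotient.mk (N := Relations.toIdeal ℂ CartanMatrix.G₂) (0 : 𝔉) := by
    refine gen_rel ?_
    have := mem_toSet_EF (1, 0)
    simpa [Relations.EF] using this
  simp at h1
  exact h1

/-- flip a bracket identity -/
lemma skw {a b c : LieAlgebra.g₂ ℂ} (hab : ⁅a, b⁆ = c) : ⁅b, a⁆ = -c := by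
  rw [← lie_skew, hab]

-- Concrete Cartan relations.
lemma lie_hα_eA : ⁅hα, eA⁆ = (2 : ℂ) • eA := by
  have := lie_genH_genE 0 0
  rw [show CartanMatrix.G₂ 0 0 = 2 by decide] at this
  norm_num at this
  exact this

lemma lie_hα_eB : ⁅hα, eB⁆ = (-3 : ℂ) • eB := by
  have := lie_genH_genE 0 1
  rw [show CartanMatrix.G₂ 0 1 = -3 by decide] at this
  norm_num at this
  rw [neg_smul]
  exact this

lemma lie_hβ_eA : ⁅hβ, eA⁆ = (-1 : ℂ) • eA := by
  have := lie_genH_genE 1 0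
  rw [show CartanMatrix.G₂ 1 0 = -1 by decide] at this
  norm_num at this
  rw [neg_smul, one_smul]
  exact this

lemma lie_hβ_eB : ⁅hβ, eB⁆ = (2 : ℂ) • eB := by
  have := lie_genH_genE 1 1
  rw [show CartanMatrix.G₂ 1 1 = 2 by decide] at this
  norm_num at this
  exact this

lemma lie_hα_fA : ⁅hα, fA⁆ = (-2 : ℂ) • fA := by
  have := lie_genH_genF 0 0
  rw [show -(CartanMatrix.G₂ 0 0) = -2 by decide] at this
  norm_num at this
  rw [neg_smul]
  exact this

lemma lie_hα_fB : ⁅hα, fB⁆ = (3 : ℂ) • fB := by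
  have := lie_genH_genF 0 1
  rw [show -(CartanMatrix.G₂ 0 1) = 3 by decide] at this
  norm_num at this
  exact this

lemma lie_hβ_fA : ⁅hβ, fA⁆ = (1 : ℂ) • fA := by
  have := lie_genH_genF 1 0
  rw [show -(CartanMatrix.G₂ 1 0) = 1 by decide] at this
  norm_num at this
  rw [one_smul]
  exact this

lemma lie_hβ_fB : ⁅hβ, fB⁆ = (-2 : ℂ) • fB := by
  have := lie_genH_genF 1 1
  rw [show -(CartanMatrix.G₂ 1 1) = -2 by decide] at this
  norm_num at this
  rw [neg_smul]
  exact this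

-- Brackets with `pE`, `qE`, `pF`, `qF`.
lemma lie_hα_pE : ⁅hα, pE⁆ = -pE := by
  rw [pE, leibniz_lie, lie_hα_eA, lie_hα_eB, smul_lie, lie_smul, ← pE]
  module

lemma lie_hβ_pE : ⁅hβ, pE⁆ = pE := by
  rw [pE, leibniz_lie, lie_hβ_eA, lie_hβ_eB, smul_lie, lie_smul, ← pE]
  module

lemma lie_hα_qE : ⁅hα, qE⁆ = qE := by
  rw [qE, leibniz_lie, lie_hα_eA, lie_hα_pE, smul_lie, lie_neg, ← qE]
  module

lemma lie_hβ_qE : ⁅hβ, qE⁆ = 0 := by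
  rw [qE, leibniz_lie, lie_hβ_eA, lie_hβ_pE, smul_lie, ← qE]
  module

lemma lie_hα_pF : ⁅hα, pF⁆ = pF := by
  rw [pF, leibniz_lie, lie_hα_fA, lie_hα_fB, smul_lie, lie_smul, ← pF]
  module

lemma lie_hβ_pF : ⁅hβ, pF⁆ = -pF := by
  rw [pF, leibniz_lie, lie_hβ_fA, lie_hβ_fB, smul_lie, lie_smul, ← pF]
  module

lemma lie_hα_qF : ⁅hα, qF⁆ = -qF := by
  rw [qF, leibniz_lie, lie_hα_fA, lie_hα_pF, smul_lie, ← qF]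
  module

lemma lie_hβ_qF : ⁅hβ, qF⁆ = 0 := by
  rw [qF, leibniz_lie, lie_hβ_fA, lie_hβ_pF, smul_lie, lie_neg, ← qF]
  module

lemma lie_h_qE : ⁅h, qE⁆ = (2 : ℂ) • qE := by
  rw [h, add_lie, smul_lie, smul_lie, lie_hα_qE, lie_hβ_qE]
  module

lemma lie_h_qF : ⁅h, qF⁆ = (-2 : ℂ) • qF := by
  rw [h, add_lie, smul_lie, smul_lie, lie_hα_qF, lie_hβ_qF]
  module

-- Mixed brackets.
lemma lie_fA_pE : ⁅fA, pE⁆ = (3 : ℂ) • eB := by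
  rw [pE, leibniz_lie, skw lie_eA_fA, skw lie_eB_fA, neg_lie, lie_hα_eB, neg_zero, lie_zero]
  module

lemma lie_fB_pE : ⁅fB, pE⁆ = -eA := by
  rw [pE, leibniz_lie, skw lie_eA_fB, skw lie_eB_fB, neg_zero, zero_lie, lie_neg, ← lie_skew,
    lie_hβ_eA]
  module

lemma lie_fA_qE : ⁅fA, qE⁆ = (4 : ℂ) • pE := by
  rw [qE, leibniz_lie, skw lie_eA_fA, lie_fA_pE, neg_lie, lie_hα_pE, lie_smul, ← pE]
  module

lemma lie_fB_qE : ⁅fB, qE⁆ = 0 := by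
  rw [qE, leibniz_lie, skw lie_eA_fB, lie_fB_pE, neg_zero, zero_lie, lie_neg, lie_self]
  simp

lemma lie_qE_pF : ⁅qE, pF⁆ = (-4 : ℂ) • eA := by
  rw [pF, leibniz_lie, skw lie_fA_qE, skw lie_fB_qE, neg_zero, lie_zero, neg_lie, smul_lie,
    skw lie_fB_pE]
  module

lemma lie_pE_pF : ⁅pE, pF⁆ = -hα - (3 : ℂ) • hβ := by
  rw [pF, leibniz_lie, skw lie_fA_pE, skw lie_fB_pE, neg_neg, skw lie_eA_fA, neg_lie, smul_lie,
    lie_eB_fB]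
  module

lemma lie_qE_qF : ⁅qE, qF⁆ = (8 : ℂ) • hα + (12 : ℂ) • hβ := by
  rw [qF, leibniz_lie, skw lie_fA_qE, lie_qE_pF, neg_lie, smul_lie, lie_pE_pF, lie_smul,
    skw lie_eA_fA]
  module

/-! ### Nontriviality via the 7-dimensional representation -/

def zE : Fin 2 → Matrix (Fin 7) (Fin 7) ℤ :=
  ![!![0,1,0,0,0,0,0; 0,0,0,0,0,0,0; 0,0,0,2,0,0,0; 0,0,0,0,1,0,0;
      0,0,0,0,0,0,0; 0,0,0,0,0,0,1; 0,0,0,0,0,0,0],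
    !![0,0,0,0,0,0,0; 0,0,1,0,0,0,0; 0,0,0,0,0,0,0; 0,0,0,0,0,0,0;
      0,0,0,0,0,1,0; 0,0,0,0,0,0,0; 0,0,0,0,0,0,0]]
def zF : Fin 2 → Matrix (Fin 7) (Fin 7) ℤ :=
  ![!![0,0,0,0,0,0,0; 1,0,0,0,0,0,0; 0,0,0,0,0,0,0; 0,0,1,0,0,0,0;
      0,0,0,2,0,0,0; 0,0,0,0,0,0,0; 0,0,0,0,0,1,0],
    !![0,0,0,0,0,0,0; 0,0,0,0,0,0,0; 0,1,0,0,0,0,0; 0,0,0,0,0,0,0;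
      0,0,0,0,0,0,0; 0,0,0,0,1,0,0; 0,0,0,0,0,0,0]]
def zH : Fin 2 → Matrix (Fin 7) (Fin 7) ℤ :=
  ![!![1,0,0,0,0,0,0; 0,-1,0,0,0,0,0; 0,0,2,0,0,0,0; 0,0,0,0,0,0,0;
      0,0,0,0,-2,0,0; 0,0,0,0,0,1,0; 0,0,0,0,0,0,-1],
    !![0,0,0,0,0,0,0; 0,1,0,0,0,0,0; 0,0,-1,0,0,0,0; 0,0,0,0,0,0,0;
      0,0,0,0,1,0,0; 0,0,0,0,0,-1,0; 0,0,0,0,0,0,0]]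

private lemma zHH : ∀ i j : Fin 2, ⁅zH i, zH j⁆ = 0 := by decide
private lemma zHE : ∀ i j : Fin 2, ⁅zH i, zE j⁆ - CartanMatrix.G₂ i j • zE j = 0 := by decide
private lemma zHF : ∀ i j : Fin 2, ⁅zH i, zF j⁆ + CartanMatrix.G₂ i j • zF j = 0 := by decide
private lemma zEF00 : ⁅zE 0, zF 0⁆ - zH 0 = 0 := by decide
private lemma zEF01 : ⁅zE 0, zF 1⁆ = 0 := by decide
private lemma zEF10 : ⁅zE 1, zF 0⁆ = 0 := by decide
private lemma zEF11 : ⁅zE 1, zF 1⁆ - zH 1 = 0 := by decide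
private lemma zadE01 : ⁅zE 0, ⁅zE 0, ⁅zE 0, ⁅zE 0, zE 1⁆⁆⁆⁆ = 0 := by decide
private lemma zadE10 : ⁅zE 1, ⁅zE 1, zE 0⁆⁆ = 0 := by decide
private lemma zadF01 : ⁅zF 0, ⁅zF 0, ⁅zF 0, ⁅zF 0, zF 1⁆⁆⁆⁆ = 0 := by decide
private lemma zadF10 : ⁅zF 1, ⁅zF 1, zF 0⁆⁆ = 0 := by decide
private lemma zq_ne : ⁅zE 0, ⁅zE 0, zE 1⁆⁆ ≠ 0 := by decide

noncomputable def ι : Matrix (Fin 7) (Fin 7) ℤ →+* Matrix (Fin 7) (Fin 7) ℂ :=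
  (Int.castRingHom ℂ).mapMatrix

lemma ι_inj : Function.Injective ι :=
  Matrix.map_injective Int.cast_injective

lemma ι_lie (A B : Matrix (Fin 7) (Fin 7) ℤ) : ⁅ι A, ι B⁆ = ι ⁅A, B⁆ := by
  simp only [Ring.lie_def, map_mul, map_sub]

attribute [local instance 100] LieRing.ofAssociativeRing

noncomputable def rep : Generators (Fin 2) → Matrix (Fin 7) (Fin 7) ℂ
  | .H i => ι (zH i)
  | .E i => ι (zE i)
  | .F i => ι (zF i)

noncomputable def Φ : 𝔉 →ₗ⁅ℂ⁆ Matrix (Fin 7) (Fin 7) ℂ :=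
  FreeLieAlgebra.lift ℂ rep

@[simp] lemma Φ_of (x : Generators (Fin 2)) : Φ (FreeLieAlgebra.of ℂ x) = rep x :=
  FreeLieAlgebra.lift_of_apply rep x

lemma Φ_HH (p : Fin 2 × Fin 2) : Φ (Relations.HH ℂ p) = 0 := by
  obtain ⟨i, j⟩ := p
  simp only [Relations.HH, Function.uncurry_apply_pair, LieHom.map_lie, Function.comp_apply,
    Φ_of, rep, ι_lie]
  rw [zHH, map_zero]

lemma Φ_EF (p : Fin 2 × Fin 2) : Φ (Relations.EF ℂ p) = 0 := by
  obtain ⟨i, j⟩ := p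
  fin_cases i <;> fin_cases j
  · show Φ (⁅(𝔈 (0 : Fin 2)), (𝔽 (0 : Fin 2))⁆ - (ℌ (0 : Fin 2)) : 𝔉) = 0
    rw [map_sub Φ, LieHom.map_lie]
    simp only [Φ_of, rep, ι_lie]
    rw [← map_sub, zEF00, map_zero]
  · show Φ (⁅(𝔈 (0 : Fin 2)), (𝔽 (1 : Fin 2))⁆ : 𝔉) = 0
    rw [LieHom.map_lie]
    simp only [Φ_of, rep, ι_lie]
    rw [zEF01, map_zero]
  · show Φ (⁅(𝔈 (1 : Fin 2)), (𝔽 (0 : Fin 2))⁆ : 𝔉) = 0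
    rw [LieHom.map_lie]
    simp only [Φ_of, rep, ι_lie]
    rw [zEF10, map_zero]
  · show Φ (⁅(𝔈 (1 : Fin 2)), (𝔽 (1 : Fin 2))⁆ - (ℌ (1 : Fin 2)) : 𝔉) = 0
    rw [map_sub Φ, LieHom.map_lie]
    simp only [Φ_of, rep, ι_lie]
    rw [← map_sub, zEF11, map_zero]

lemma Φ_HE (p : Fin 2 × Fin 2) : Φ (Relations.HE ℂ CartanMatrix.G₂ p) = 0 := by
  obtain ⟨i, j⟩ := p
  simp only [Relations.HE, Function.uncurry_apply_pair]
  rw [← Int.cast_smul_eq_zsmul ℂ, map_sub Φ, LieHom.map_lie, map_smul Φ]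
  simp only [Function.comp_apply, Φ_of, rep, ι_lie]
  rw [Int.cast_smul_eq_zsmul, ← map_zsmul ι, ← map_sub, zHE, map_zero]

lemma Φ_HF (p : Fin 2 × Fin 2) : Φ (Relations.HF ℂ CartanMatrix.G₂ p) = 0 := by
  obtain ⟨i, j⟩ := p
  simp only [Relations.HF, Function.uncurry_apply_pair]
  rw [← Int.cast_smul_eq_zsmul ℂ, map_add Φ, LieHom.map_lie, map_smul Φ]
  simp only [Function.comp_apply, Φ_of, rep, ι_lie]
  rw [Int.cast_smul_eq_zsmul, ← map_zsmul ι, ← map_add, zHF, map_zero]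

lemma Φ_adE (p : Fin 2 × Fin 2) : Φ (Relations.adE ℂ CartanMatrix.G₂ p) = 0 := by
  obtain ⟨i, j⟩ := p
  fin_cases i <;> fin_cases j
  · show Φ (⁅(𝔈 (0 : Fin 2)), (𝔈 (0 : Fin 2))⁆ : 𝔉) = 0
    rw [lie_self, map_zero Φ]
  · show Φ (⁅(𝔈 (0 : Fin 2)), ⁅(𝔈 (0 : Fin 2)), ⁅(𝔈 (0 : Fin 2)), ⁅(𝔈 (0 : Fin 2)),
          (𝔈 (1 : Fin 2))⁆⁆⁆⁆ : 𝔉) = 0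
    simp only [LieHom.map_lie, Φ_of, rep, ι_lie]
    rw [zadE01, map_zero]
  · show Φ (⁅(𝔈 (1 : Fin 2)), ⁅(𝔈 (1 : Fin 2)), (𝔈 (0 : Fin 2))⁆⁆ : 𝔉) = 0
    simp only [LieHom.map_lie, Φ_of, rep, ι_lie]
    rw [zadE10, map_zero]
  · show Φ (⁅(𝔈 (1 : Fin 2)), (𝔈 (1 : Fin 2))⁆ : 𝔉) = 0
    rw [lie_self, map_zero Φ]

lemma Φ_adF (p : Fin 2 × Fin 2) : Φ (Relations.adF ℂ CartanMatrix.G₂ p) = 0 := by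
  obtain ⟨i, j⟩ := p
  fin_cases i <;> fin_cases j
  · show Φ (⁅(𝔽 (0 : Fin 2)), (𝔽 (0 : Fin 2))⁆ : 𝔉) = 0
    rw [lie_self, map_zero Φ]
  · show Φ (⁅(𝔽 (0 : Fin 2)), ⁅(𝔽 (0 : Fin 2)), ⁅(𝔽 (0 : Fin 2)), ⁅(𝔽 (0 : Fin 2)),
          (𝔽 (1 : Fin 2))⁆⁆⁆⁆ : 𝔉) = 0
    simp only [LieHom.map_lie, Φ_of, rep, ι_lie]
    rw [zadF01, map_zero]
  · show Φ (⁅(𝔽 (1 : Fin 2)), ⁅(𝔽 (1 : Fin 2)), (𝔽 (0 : Fin 2))⁆⁆ : 𝔉) = 0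
    simp only [LieHom.map_lie, Φ_of, rep, ι_lie]
    rw [zadF10, map_zero]
  · show Φ (⁅(𝔽 (1 : Fin 2)), (𝔽 (1 : Fin 2))⁆ : 𝔉) = 0
    rw [lie_self, map_zero Φ]

lemma toIdeal_le_ker : Relations.toIdeal ℂ CartanMatrix.G₂ ≤ Φ.ker := by
  rw [Relations.toIdeal, LieSubmodule.lieSpan_le]
  rintro x hx
  simp only [SetLike.mem_coe, LieHom.mem_ker]
  rcases hx with (((((⟨p, rfl⟩ | ⟨p, rfl⟩) | ⟨p, rfl⟩) | ⟨p, rfl⟩) | ⟨p, rfl⟩) | ⟨p, rfl⟩)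
  · exact Φ_HH p
  · exact Φ_EF p
  · exact Φ_HE p
  · exact Φ_HF p
  · exact Φ_adE p
  · exact Φ_adF p

lemma qE_ne_zero : qE ≠ 0 := by
  intro hq
  have hmem : (⁅(𝔈 (0 : Fin 2)), ⁅(𝔈 (0 : Fin 2)), (𝔈 (1 : Fin 2))⁆⁆ : 𝔉) ∈
      Relations.toIdeal ℂ CartanMatrix.G₂ := by
    rw [← LieSubmodule.Quotient.mk_eq_zero']
    exact hq
  have h0 : Φ (⁅(𝔈 (0 : Fin 2)), ⁅(𝔈 (0 : Fin 2)), (𝔈 (1 : Fin 2))⁆⁆ : 𝔉) = 0 :=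
    LieHom.mem_ker.mp (toIdeal_le_ker hmem)
  simp only [LieHom.map_lie, Φ_of, rep, ι_lie] at h0
  rw [← map_zero ι] at h0
  exact zq_ne (ι_inj h0)

end Aux

/-- There exist `e ≠ 0` and `f` in `𝔤₂` completing `h = 2h_α + 3h_β`
into an `sl₂`-triple: `[h, e] = 2e`, `[h, f] = −2f` and `[e, f] = h`. -/
theorem exists_sl2_triple :
    ∃ e f : LieAlgebra.g₂ ℂ, e ≠ 0 ∧
      ⁅h, e⁆ = (2 : ℂ) • e ∧ ⁅h, f⁆ = (-2 : ℂ) • f ∧ ⁅e, f⁆ = h := by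
  refine ⟨qE, (4 : ℂ)⁻¹ • qF, qE_ne_zero, lie_h_qE, ?_, ?_⟩
  · rw [lie_smul, lie_h_qF]
    match_scalars <;> norm_num
  · rw [lie_smul, lie_qE_qF, h]
    match_scalars <;> norm_num

end G2Orbit
end
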